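/- Let 0 < ν < 1 and t_j, p_j, t_k, p_k ≥ 0 with t_j ≤ t_k. Suppose there exists m ≥ 0 with m ≥ t_j ≥ ν·m and m ≥ t_k ≥ ν·m, and p_j ≥ ν·t_j, p_k ≥ ν·t_k. Then: (a) if t_j < t_k, p_j < p_k (Leaf 2), then t_j + p_j + t_k ≤ (1 + 1/(ν+ν²))·(t_j+p_j); (b) if t_j < t_k, p_k < p_j, t_k < p_j (Leaf 3), then t_j + t_k + p_k ≤ (1 + 1/(ν+ν²))·min(t_j+p_j, t_k+p_k); (c) if t_j < t_k, p_j < t_k (Leaf 1) and t_k+p_k ≤ t_j+p_j, then t_j + p_j ≤ (2/(1+ν))·(t_k+p_k). Consequently the green-arc delay ratio is at most 1 + 1/(ν+ν²). -/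

import Mathlib

theorem green_arc_ratio
    (ν : ℝ) (hν0 : 0 < ν) (hν1 : ν < 1)
    (tj pj tk pk m : ℝ)
    (htj : 0 ≤ tj) (hpj : 0 ≤ pj) (htk : 0 ≤ tk) (hpk : 0 ≤ pk)
    (hjk : tj ≤ tk) (hm : 0 ≤ m)
    (hmj1 : m ≥ tj) (hmj2 : tj ≥ ν * m)
    (hmk1 : m ≥ tk) (hmk2 : tk ≥ ν * m)
    (hpjν : pj ≥ ν * tj) (hpkν : pk ≥ ν * tk) :
    (tj < tk → pj < pk →
      tj + pj + tk ≤ (1 + 1 / (ν + ν ^ 2)) * (tj + pj)) ∧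
    (tj < tk → pk < pj → tk < pj →
      tj + tk + pk ≤ (1 + 1 / (ν + ν ^ 2)) * min (tj + pj) (tk + pk)) ∧
    (tj < tk → pj < tk → tk + pk ≤ tj + pj →
      tj + pj ≤ 2 / (1 + ν) * (tk + pk)) := by
  have hc : 0 < ν + ν ^ 2 := by positivity
  have hνtk : ν * tk ≤ tj := le_trans (by nlinarith) hmj2
  have hkey1 : tk ≤ (tj + pj) / (ν + ν ^ 2) := by
    rw [le_div_iff₀ hc]; nlinarith
  have hkey2 : tj ≤ (tk + pk) / (ν + ν ^ 2) := by
    rw [le_div_iff₀ hc]; nlinarith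
  have hexp : ∀ x : ℝ, (1 + 1 / (ν + ν ^ 2)) * x = x + x / (ν + ν ^ 2) := by
    intro x; field_simp
  refine ⟨?_, ?_, ?_⟩
  · intro _ _
    rw [hexp]; linarith
  · intro _ h2 _
    rcases le_total (tj + pj) (tk + pk) with h | h
    · rw [min_eq_left h, hexp]
      have : tj + pj ≤ tk + pk := h
      have hd : (tj + pj) / (ν + ν ^ 2) ≥ tk := hkey1
      linarith
    · rw [min_eq_right h, hexp]
      linarith
  · intro _ h2 _
    rw [div_mul_eq_mul_div, le_div_iff₀ (by linarith : (0:ℝ) < 1 + ν)]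
    nlinarith
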